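/- Let μ > 0 and n ≥ 1. Let R_1, …, R_N be n×M real matrices with R_i R_iᵀ = I_n, let Ẑ_1, …, Ẑ_N be n×n real symmetric idempotent matrices, and suppose the index set {1,…,N} can be partitioned into n groups Ω_1, …, Ω_n such that R_k R_lᵀ = 0 for all distinct k, l belonging to the same group. Suppose further that W = (1/(μ+n))·(μ·I_M + Σ_{i=1}^N R_iᵀ Ẑ_i R_i) satisfies W 𝟙_M = 𝟙_M. Then the spectral norm of W equals 1, i.e. ‖W‖₂ = 1; equivalently the largest eigenvalue of W is exactly 1. -/

import Mathlib

open Matrix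

section Aux

variable {m : Type*} [Fintype m] [DecidableEq m]

lemma psd_smul_real {A : Matrix m m ℝ} (hA : A.PosSemidef) {c : ℝ} (hc : 0 ≤ c) :
    (c • A).PosSemidef := by
  refine ⟨?_, fun x => ?_⟩
  · show (c • A)ᴴ = c • A
    rw [conjTranspose_smul, hA.1]
    simp
  · exact (hA.smul hc).2 x

lemma psd_of_proj {P : Matrix m m ℝ} (hsym : Pᴴ = P) (hidem : P * P = P) : P.PosSemidef := by
  have h : P = Pᴴ * P := by rw [hsym, hidem]
  rw [h]
  exact posSemidef_conjTranspose_mul_self P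

lemma psd_one_sub_proj {P : Matrix m m ℝ} (hsym : Pᴴ = P) (hidem : P * P = P) :
    ((1 : Matrix m m ℝ) - P).PosSemidef := by
  have h1 : ((1 : Matrix m m ℝ) - P)ᴴ = 1 - P := by
    rw [conjTranspose_sub, conjTranspose_one, hsym]
  have h2 : ((1 : Matrix m m ℝ) - P) * (1 - P) = 1 - P := by
    rw [sub_mul, mul_sub, mul_sub, hidem]
    simp only [Matrix.one_mul, Matrix.mul_one]
    abel
  exact psd_of_proj h1 h2

lemma psd_sum_real {ι : Type*} (s : Finset ι) (f : ι → Matrix m m ℝ)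
    (hf : ∀ i ∈ s, (f i).PosSemidef) : (∑ i ∈ s, f i).PosSemidef := by
  classical
  induction s using Finset.induction with
  | empty => simpa using (Matrix.PosSemidef.zero (n := m) (R := ℝ))
  | @insert a s hnot ih =>
    rw [Finset.sum_insert hnot]
    exact (hf _ (Finset.mem_insert_self _ _)).add
      (ih fun i hi => hf i (Finset.mem_insert_of_mem hi))

end Aux

theorem ksvd_filter_spectral_norm_one
    (μ : ℝ) (hμ : 0 < μ) (n N M : ℕ) (hn : 1 ≤ n) (hM : 0 < M)
    (R : Fin N → Matrix (Fin n) (Fin M) ℝ)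
    (hRR : ∀ i, R i * (R i)ᵀ = 1)
    (Z : Fin N → Matrix (Fin n) (Fin n) ℝ)
    (hZsymm : ∀ i, (Z i)ᵀ = Z i)
    (hZidem : ∀ i, Z i * Z i = Z i)
    (g : Fin N → Fin n)
    (hg : ∀ k l, k ≠ l → g k = g l → R k * (R l)ᵀ = 0)
    (W : Matrix (Fin M) (Fin M) ℝ)
    (hW : W = (μ + (n : ℝ))⁻¹ •
      (μ • (1 : Matrix (Fin M) (Fin M) ℝ) + ∑ i, (R i)ᵀ * Z i * R i))
    (hW1 : W *ᵥ (fun _ => (1 : ℝ)) = fun _ => (1 : ℝ)) :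
    ‖Matrix.toEuclideanCLM (𝕜 := ℝ) W‖ = 1 := by
  classical
  have hμn : (0:ℝ) < μ + n := by positivity
  set c : ℝ := (μ + (n:ℝ))⁻¹ with hc
  set S : Matrix (Fin M) (Fin M) ℝ := ∑ i, (R i)ᵀ * Z i * R i with hS
  -- basic PSD facts
  have hZpsd : ∀ i, (Z i).PosSemidef := fun i =>
    psd_of_proj (by rw [conjTranspose_eq_transpose_of_trivial, hZsymm]) (hZidem i)
  have hZpsd' : ∀ i, ((1 : Matrix (Fin n) (Fin n) ℝ) - Z i).PosSemidef := fun i =>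
    psd_one_sub_proj (by rw [conjTranspose_eq_transpose_of_trivial, hZsymm]) (hZidem i)
  have hterm : ∀ i, ((R i)ᵀ * Z i * R i).PosSemidef := fun i => by
    have := (hZpsd i).conjTranspose_mul_mul_same (R i)
    rwa [conjTranspose_eq_transpose_of_trivial] at this
  have hterm' : ∀ i, ((R i)ᵀ * (1 - Z i) * R i).PosSemidef := fun i => by
    have := (hZpsd' i).conjTranspose_mul_mul_same (R i)
    rwa [conjTranspose_eq_transpose_of_trivial] at this
  have hSpsd : S.PosSemidef := psd_sum_real _ _ (fun i _ => hterm i)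
  -- within each group, the sum of the patch projectors is dominated by the identity
  have hPj : ∀ j : Fin n,
      ((1 : Matrix (Fin M) (Fin M) ℝ) -
        ∑ i ∈ Finset.univ.filter (fun i => g i = j), (R i)ᵀ * Z i * R i).PosSemidef := by
    intro j
    set s := Finset.univ.filter (fun i : Fin N => g i = j) with hs
    set P : Matrix (Fin M) (Fin M) ℝ := ∑ i ∈ s, (R i)ᵀ * R i with hP
    have hPsym : Pᴴ = P := by
      rw [conjTranspose_eq_transpose_of_trivial, hP, transpose_sum]
      exact Finset.sum_congr rfl fun i _ => by rw [transpose_mul, transpose_transpose]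
    have hPidem : P * P = P := by
      rw [hP, Finset.sum_mul_sum]
      refine Finset.sum_congr rfl fun k hk => ?_
      rw [Finset.sum_eq_single k]
      · rw [Matrix.mul_assoc, ← Matrix.mul_assoc (R k), hRR k, Matrix.one_mul]
      · intro l hl hlk
        have hgl : g k = g l := by
          have h1 : g k = j := (Finset.mem_filter.mp hk).2
          have h2 : g l = j := (Finset.mem_filter.mp hl).2
          rw [h1, h2]
        have h0 : R k * (R l)ᵀ = 0 := hg k l (fun h => hlk (h.symm)) hgl
        rw [Matrix.mul_assoc, ← Matrix.mul_assoc (R k), h0, Matrix.zero_mul, Matrix.mul_zero]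
      · intro h; exact absurd hk h
    have hsplit : (1 : Matrix (Fin M) (Fin M) ℝ) - ∑ i ∈ s, (R i)ᵀ * Z i * R i
        = ((1 : Matrix (Fin M) (Fin M) ℝ) - P) + ∑ i ∈ s, (R i)ᵀ * (1 - Z i) * R i := by
      have h1 : ∀ i, (R i)ᵀ * (1 - Z i) * R i = (R i)ᵀ * R i - (R i)ᵀ * Z i * R i := by
        intro i
        rw [Matrix.mul_sub, Matrix.mul_one, Matrix.sub_mul]
      rw [Finset.sum_congr rfl (fun i _ => h1 i), Finset.sum_sub_distrib, ← hP]
      abel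
    rw [hsplit]
    exact (psd_one_sub_proj hPsym hPidem).add (psd_sum_real _ _ (fun i _ => hterm' i))
  -- S ⪯ n • 1
  have hbound : ((n:ℝ) • (1 : Matrix (Fin M) (Fin M) ℝ) - S).PosSemidef := by
    have hsum : ∑ j : Fin n, ((1 : Matrix (Fin M) (Fin M) ℝ) -
        ∑ i ∈ Finset.univ.filter (fun i => g i = j), (R i)ᵀ * Z i * R i)
        = (n:ℝ) • (1 : Matrix (Fin M) (Fin M) ℝ) - S := by
      rw [Finset.sum_sub_distrib, Finset.sum_const, Finset.card_univ, Fintype.card_fin]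
      congr 1
      · rw [Nat.cast_smul_eq_nsmul]
      · rw [hS]
        have := Finset.sum_fiberwise_eq_sum_filter Finset.univ Finset.univ g
          (fun i => (R i)ᵀ * Z i * R i)
        simpa using this
    rw [← hsum]
    exact psd_sum_real _ _ (fun j _ => hPj j)
  -- W is PSD and 1 - W is PSD
  have hWpsd : W.PosSemidef := by
    rw [hW]
    exact psd_smul_real ((psd_smul_real Matrix.PosSemidef.one hμ.le).add hSpsd)
      (inv_nonneg.mpr hμn.le)
  have hWeq : (1 : Matrix (Fin M) (Fin M) ℝ) - W = c • ((n:ℝ) • 1 - S) := by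
    rw [hW]
    have hcc : c * (μ + n) = 1 := inv_mul_cancel₀ hμn.ne'
    match_scalars <;> (rw [hc]; field_simp) <;> ring
  have h1W : ((1 : Matrix (Fin M) (Fin M) ℝ) - W).PosSemidef := by
    rw [hWeq]
    exact psd_smul_real hbound (inv_nonneg.mpr hμn.le)
  -- 1 - W * W is PSD
  have h1WW : ((1 : Matrix (Fin M) (Fin M) ℝ) - W * W).PosSemidef := by
    obtain ⟨s, hss, hsherm⟩ : ∃ s : Matrix (Fin M) (Fin M) ℝ, s * s = W ∧ sᴴ = s := by
      open scoped MatrixOrder in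
      exact ⟨CFC.sqrt W, CFC.sqrt_mul_sqrt_self W hWpsd.nonneg, (CFC.sqrt_nonneg W).posSemidef.1⟩
    have key : s * (1 - W) * sᴴ = W - W * W := by
      rw [hsherm, ← hss]
      noncomm_ring
    have h2 : (W - W * W).PosSemidef := by
      rw [← key]
      exact h1W.mul_mul_conjTranspose_same s
    have h3 : (1 : Matrix (Fin M) (Fin M) ℝ) - W * W = (1 - W) + (W - W * W) := by abel
    rw [h3]
    exact h1W.add h2
  have hWsym : Wᵀ = W := by
    rw [← conjTranspose_eq_transpose_of_trivial]
    exact hWpsd.1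
  set T := Matrix.toEuclideanCLM (𝕜 := ℝ) W with hT
  have hTapply : ∀ v : Fin M → ℝ,
      T ((WithLp.equiv 2 _).symm v) = (WithLp.equiv 2 _).symm (W *ᵥ v) := by
    intro v
    exact Matrix.toEuclideanCLM_toLp W v
  refine le_antisymm ?_ ?_
  · refine ContinuousLinearMap.opNorm_le_bound _ zero_le_one fun x => ?_
    rw [one_mul]
    set v : Fin M → ℝ := WithLp.equiv 2 (Fin M → ℝ) x with hv
    have hxv : x = (WithLp.equiv 2 (Fin M → ℝ)).symm v := by
      rw [hv]; simp
    have hnorm2 : ‖T x‖ ^ 2 = (W *ᵥ v) ⬝ᵥ (W *ᵥ v) := by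
      rw [← real_inner_self_eq_norm_sq, EuclideanSpace.inner_eq_star_dotProduct]
      rw [hxv, hTapply]
      simp
    have hx2 : ‖x‖ ^ 2 = v ⬝ᵥ v := by
      rw [← real_inner_self_eq_norm_sq, EuclideanSpace.inner_eq_star_dotProduct]
      simp [hv]
    have hdot : (W *ᵥ v) ⬝ᵥ (W *ᵥ v) = v ⬝ᵥ ((W * W) *ᵥ v) := by
      rw [← Matrix.mulVec_mulVec, Matrix.dotProduct_mulVec v W]
      congr 1
      rw [← hWsym, Matrix.vecMul_transpose, hWsym]
    have hle : (W *ᵥ v) ⬝ᵥ (W *ᵥ v) ≤ v ⬝ᵥ v := by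
      have := h1WW.dotProduct_mulVec_nonneg v
      rw [Matrix.sub_mulVec, Matrix.one_mulVec, dotProduct_sub] at this
      have hstar : star v = v := by
        funext i; simp
      rw [hstar] at this
      rw [hdot]
      linarith
    have hsq : ‖T x‖ ^ 2 ≤ ‖x‖ ^ 2 := by rw [hnorm2, hx2]; exact hle
    nlinarith [norm_nonneg (T x), norm_nonneg x]
  · set y : EuclideanSpace ℝ (Fin M) := (WithLp.equiv 2 (Fin M → ℝ)).symm (fun _ => 1) with hy
    have hTy : T y = y := by
      rw [hy, hTapply, hW1]
    have hy0 : y ≠ 0 := by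
      intro h
      have h1 : y ⟨0, hM⟩ = (1 : ℝ) := rfl
      rw [h] at h1
      simp at h1
    have hypos : 0 < ‖y‖ := norm_pos_iff.mpr hy0
    have := T.le_opNorm y
    rw [hTy] at this
    exact (le_mul_iff_one_le_left hypos).mp this
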